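/- Let A be a Banach algebra over ℂ that is isomorphic as a ℂ-algebra to a finite direct sum of full matrix algebras M_{n₁}(ℂ) ⊕ ⋯ ⊕ M_{n_k}(ℂ). Then for every bounded Banach A-bimodule X, every bounded derivation δ : A → X is inner; that is, H¹(A, X) = 0 for every bounded Banach A-bimodule X. -/

import Mathlib

/-- If a Banach algebra `A` over ℂ is isomorphic as a ℂ-algebra to a finite direct sum
of full matrix algebras, then every bounded derivation of `A` into every bounded Banach
`A`-bimodule `X` is inner, i.e. `H¹(A, X) = 0`.  The bimodule structure on `X` is
encoded by commuting actions of `A` and `Aᵐᵒᵖ` compatible with the ℂ-structure, with a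
joint bound `‖a·x·b‖ ≤ c‖a‖‖x‖‖b‖`. -/
theorem sum_of_matrix_algebras_has_trivial_H1
    (A : Type) [NormedRing A] [NormedAlgebra ℂ A] [CompleteSpace A]
    (k : ℕ) (n : Fin k → ℕ)
    (hA : Nonempty (A ≃ₐ[ℂ] Π i, Matrix (Fin (n i)) (Fin (n i)) ℂ))
    (X : Type) [NormedAddCommGroup X] [NormedSpace ℂ X] [CompleteSpace X]
    [Module A X] [Module Aᵐᵒᵖ X] [SMulCommClass A Aᵐᵒᵖ X]
    [IsScalarTower ℂ A X] [IsScalarTower ℂ Aᵐᵒᵖ X]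
    (c : ℝ)
    (hbound : ∀ (a b : A) (x : X), ‖a • MulOpposite.op b • x‖ ≤ c * ‖a‖ * ‖x‖ * ‖b‖)
    (δ : A →L[ℂ] X)
    (hδ : ∀ x y : A, δ (x * y) = x • δ y + MulOpposite.op y • δ x) :
    ∃ m : X, ∀ a : A, δ a = a • m - MulOpposite.op a • m := by
  obtain ⟨φ⟩ := hA
  haveI : SMulCommClass ℂ A X := IsScalarTower.to_smulCommClass
  -- matrix units embedded in the product
  let E : ∀ i : Fin k, Fin (n i) → Fin (n i) → (Π i, Matrix (Fin (n i)) (Fin (n i)) ℂ) :=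
    fun i r s => Pi.single i (Matrix.single r s 1)
  let z : ∀ i : Fin k, Fin (n i) → Fin (n i) := fun i j => ⟨0, j.pos⟩
  let u : (Σ i, Fin (n i)) → (Π i, Matrix (Fin (n i)) (Fin (n i)) ℂ) :=
    fun t => E t.1 t.2 (z t.1 t.2)
  let v : (Σ i, Fin (n i)) → (Π i, Matrix (Fin (n i)) (Fin (n i)) ℂ) :=
    fun t => E t.1 (z t.1 t.2) t.2
  -- the bilinear map
  let g : (Π i, Matrix (Fin (n i)) (Fin (n i)) ℂ) →ₗ[ℂ]
      (Π i, Matrix (Fin (n i)) (Fin (n i)) ℂ) →ₗ[ℂ] X :=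
    LinearMap.mk₂ ℂ (fun p q => φ.symm p • δ (φ.symm q))
    (fun p p' q => by rw [map_add, add_smul])
    (fun s p q => by rw [map_smul, smul_assoc])
    (fun p q q' => by rw [map_add, map_add, smul_add])
    (fun p s q => by rw [map_smul, map_smul, smul_comm])
  -- multiplying a Pi.single
  have hsl : ∀ (b : Π i, Matrix (Fin (n i)) (Fin (n i)) ℂ) (i : Fin k)
      (M : Matrix (Fin (n i)) (Fin (n i)) ℂ),
      b * Pi.single i M = Pi.single i (b i * M) := by
    intro b i M
    funext i'
    rcases eq_or_ne i' i with rfl | h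
    · simp [Pi.mul_apply]
    · simp [Pi.single_apply, h, Pi.mul_apply]
  have hsr : ∀ (b : Π i, Matrix (Fin (n i)) (Fin (n i)) ℂ) (i : Fin k)
      (M : Matrix (Fin (n i)) (Fin (n i)) ℂ),
      Pi.single i M * b = Pi.single i (M * b i) := by
    intro b i M
    funext i'
    rcases eq_or_ne i' i with rfl | h
    · simp [Pi.mul_apply]
    · simp [Pi.single_apply, h, Pi.mul_apply]
  -- expansion lemmas
  have hbu : ∀ (b : Π i, Matrix (Fin (n i)) (Fin (n i)) ℂ) (i : Fin k) (j : Fin (n i)),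
      b * u ⟨i, j⟩ = ∑ l, b i l j • u ⟨i, l⟩ := by
    intro b i j
    show b * Pi.single i _ = _
    rw [hsl]
    have h1 : b i * Matrix.single j (z i j) 1
        = ∑ l, b i l j • Matrix.single l (z i j) 1 := by
      ext r s
      simp [Matrix.mul_apply, Matrix.single, Matrix.sum_apply, ite_and,
        Finset.sum_ite_eq, Finset.sum_ite_eq', mul_comm]
    rw [h1]
    have h2 : ∀ (f : Fin (n i) → Matrix (Fin (n i)) (Fin (n i)) ℂ),
        (Pi.single i (∑ l, f l) : Π i, Matrix (Fin (n i)) (Fin (n i)) ℂ)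
          = ∑ l, Pi.single i (f l) := by
      intro f
      funext i'
      rcases eq_or_ne i' i with rfl | h
      · simp [Finset.sum_apply]
      · simp [Finset.sum_apply, Pi.single_eq_of_ne h]
    rw [h2]
    simp only [Pi.single_smul]
    rfl
  have hvb : ∀ (b : Π i, Matrix (Fin (n i)) (Fin (n i)) ℂ) (i : Fin k) (j : Fin (n i)),
      v ⟨i, j⟩ * b = ∑ l, b i j l • v ⟨i, l⟩ := by
    intro b i j
    show Pi.single i _ * b = _
    rw [hsr]
    have h1 : Matrix.single (z i j) j 1 * b i
        = ∑ l, b i j l • Matrix.single (z i j) l 1 := by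
      ext r s
      simp [Matrix.mul_apply, Matrix.single, Matrix.sum_apply, ite_and,
        Finset.sum_ite_eq, Finset.sum_ite_eq', mul_comm]
    rw [h1]
    have h2 : ∀ (f : Fin (n i) → Matrix (Fin (n i)) (Fin (n i)) ℂ),
        (Pi.single i (∑ l, f l) : Π i, Matrix (Fin (n i)) (Fin (n i)) ℂ)
          = ∑ l, Pi.single i (f l) := by
      intro f
      funext i'
      rcases eq_or_ne i' i with rfl | h
      · simp [Finset.sum_apply]
      · simp [Finset.sum_apply, Pi.single_eq_of_ne h]
    rw [h2]
    simp only [Pi.single_smul]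
    rfl
  -- the separability identity ∑ uₜvₜ = 1
  have hone : ∑ t : Σ i, Fin (n i), u t * v t = 1 := by
    have h3 : ∀ t : Σ i, Fin (n i), u t * v t
        = Pi.single t.1 (Matrix.single t.2 t.2 (1 : ℂ)) := by
      intro ⟨i, j⟩
      show Pi.single i _ * Pi.single i _ = _
      rw [hsr]
      simp
    rw [Finset.sum_congr rfl (fun t _ => h3 t)]
    rw [← Finset.univ_sigma_univ, Finset.sum_sigma]
    have h4 : ∀ i : Fin k,
        (∑ j : Fin (n i), Pi.single i (Matrix.single j j (1 : ℂ))
          : Π i, Matrix (Fin (n i)) (Fin (n i)) ℂ)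
        = Pi.single i (1 : Matrix (Fin (n i)) (Fin (n i)) ℂ) := by
      intro i
      funext i'
      rcases eq_or_ne i' i with rfl | h
      · simp only [Finset.sum_apply, Pi.single_eq_same]
        ext r s
        simp [Matrix.sum_apply, Matrix.single, Matrix.one_apply, ite_and,
          Finset.sum_ite_eq, Finset.sum_ite_eq', eq_comm]
      · simp [Finset.sum_apply, Pi.single_eq_of_ne h]
    rw [Finset.sum_congr rfl (fun i _ => h4 i)]
    exact Finset.univ_sum_single (1 : Π i, Matrix (Fin (n i)) (Fin (n i)) ℂ)
  -- key commutation identity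
  have key : ∀ b : Π i, Matrix (Fin (n i)) (Fin (n i)) ℂ,
      ∑ t : Σ i, Fin (n i), g (b * u t) (v t)
        = ∑ t : Σ i, Fin (n i), g (u t) (v t * b) := by
    intro b
    rw [← Finset.univ_sigma_univ, Finset.sum_sigma, Finset.sum_sigma]
    refine Finset.sum_congr rfl (fun i _ => ?_)
    have hL : ∀ j : Fin (n i), g (b * u ⟨i, j⟩) (v ⟨i, j⟩)
        = ∑ l, b i l j • g (u ⟨i, l⟩) (v ⟨i, j⟩) := by
      intro j
      rw [hbu b i j]
      simp [map_sum, LinearMap.sum_apply]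
    have hR : ∀ j : Fin (n i), g (u ⟨i, j⟩) (v ⟨i, j⟩ * b)
        = ∑ l, b i j l • g (u ⟨i, j⟩) (v ⟨i, l⟩) := by
      intro j
      rw [hvb b i j]
      simp [map_sum, map_smul]
    rw [Finset.sum_congr rfl fun j _ => hL j, Finset.sum_congr rfl fun j _ => hR j,
      Finset.sum_comm]
  -- the implementing element
  refine ⟨∑ t : Σ i, Fin (n i), g (u t) (v t), fun a => ?_⟩
  have e1 : a • (∑ t : Σ i, Fin (n i), g (u t) (v t))
      = ∑ t : Σ i, Fin (n i), g (φ a * u t) (v t) := by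
    rw [Finset.smul_sum]
    refine Finset.sum_congr rfl (fun t _ => ?_)
    show a • (φ.symm (u t) • δ (φ.symm (v t))) = φ.symm (φ a * u t) • δ (φ.symm (v t))
    rw [map_mul, AlgEquiv.symm_apply_apply, smul_smul]
  have e2 : ∀ t : Σ i, Fin (n i), g (u t) (v t * φ a)
      = (φ.symm (u t) * φ.symm (v t)) • δ a + MulOpposite.op a • g (u t) (v t) := by
    intro t
    show φ.symm (u t) • δ (φ.symm (v t * φ a)) = _
      + MulOpposite.op a • (φ.symm (u t) • δ (φ.symm (v t)))
    rw [map_mul, AlgEquiv.symm_apply_apply, hδ, smul_add, smul_smul,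
      smul_comm (φ.symm (u t)) (MulOpposite.op a)]
  have e3 : ∑ t : Σ i, Fin (n i), (φ.symm (u t) * φ.symm (v t)) • δ a = δ a := by
    have h5 : ∑ t : Σ i, Fin (n i), φ.symm (u t) * φ.symm (v t) = 1 := by
      have := congrArg φ.symm hone
      rw [map_sum, map_one] at this
      rw [← this]
      exact Finset.sum_congr rfl fun t _ => (map_mul φ.symm (u t) (v t)).symm
    rw [← Finset.sum_smul, h5, one_smul]
  rw [e1, key (φ a), Finset.sum_congr rfl fun t _ => e2 t, Finset.sum_add_distrib, e3,
    ← Finset.smul_sum]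
  abel
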